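/- Let C ⊆ ℝ^n be a nonempty compact convex set of diameter δ > 0 with set of extreme points V, and let f : ℝ^n → ℝ be convex, differentiable, and L-smooth on C. Let (α^t, S^t, x^t)_{t≥0} be an away-step Frank-Wolfe (AFW) sequence with line-search as defined in the context, started from α^0 the indicator weight of a single extreme point x^0 ∈ V. Then for every t ≥ 1, f(x^t) − min_{x∈C} f(x) ≤ 4Lδ²/t. -/

import Mathlib

set_option linter.unusedSectionVars false
set_option maxHeartbeats 1000000
open RealInnerProductSpace Classical

/-- Gradient inequality for convex differentiable functions. -/
theorem afw_grad_ineq {n : ℕ} {C : Set (EuclideanSpace ℝ (Fin n))}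
    {f : EuclideanSpace ℝ (Fin n) → ℝ} {gp p q : EuclideanSpace ℝ (Fin n)}
    (hconv : ConvexOn ℝ C f) (hg : HasGradientAt f gp p)
    (hp : p ∈ C) (hq : q ∈ C) :
    f p + ⟪gp, q - p⟫ ≤ f q := by
  have hA : HasDerivAt (fun τ : ℝ => p + τ • (q - p)) (q - p) 0 := by
    simpa using ((hasDerivAt_id (0:ℝ)).smul_const (q - p)).const_add p
  set φ : ℝ → ℝ := fun τ => f (p + τ • (q - p)) with hφ
  have hD : HasDerivAt φ ⟪gp, q - p⟫ 0 := by
    have hg' : HasFDerivAt f ((InnerProductSpace.toDual ℝ _) gp) (p + (0:ℝ) • (q - p)) := by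
      simpa using hg.hasFDerivAt
    have := hg'.comp_hasDerivAt 0 hA
    exact this
  have hslope : ∀ τ ∈ Set.Ioc (0:ℝ) 1, slope φ 0 τ ≤ f q - f p := by
    intro τ hτ
    have h1 : φ τ ≤ (1 - τ) * f p + τ * f q := by
      have h2 := hconv.2 hp hq (by linarith [hτ.2] : (0:ℝ) ≤ 1 - τ) (le_of_lt hτ.1)
        (by ring)
      have h3 : (1 - τ) • p + τ • q = p + τ • (q - p) := by
        rw [smul_sub, sub_smul, one_smul]; abel
      rw [h3] at h2
      simpa [hφ, smul_eq_mul] using h2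
    have hφ0 : φ 0 = f p := by simp [hφ]
    rw [slope_def_field, hφ0]
    rw [div_le_iff₀ (by linarith [hτ.1] : (0:ℝ) < τ - 0)]
    nlinarith [hτ.1]
  have htend : Filter.Tendsto (slope φ 0) (nhdsWithin 0 (Set.Ioi 0)) (nhds ⟪gp, q - p⟫) := by
    have := hasDerivAt_iff_tendsto_slope.1 hD
    exact this.mono_left (nhdsWithin_mono 0 (fun z hz => ne_of_gt hz))
  have hle : ⟪gp, q - p⟫ ≤ f q - f p := by
    refine le_of_tendsto htend ?_
    filter_upwards [Ioc_mem_nhdsGT_of_mem (Set.mem_Ico.2 ⟨le_rfl, one_pos⟩)] with τ hτ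
      using hslope τ hτ
  linarith

section helpers
variable {E : Type*} [AddCommGroup E] [Module ℝ E]

theorem afw_finsum_eq_sum (w : E → ℝ) (s : Finset E) (h : ∀ u, w u ≠ 0 → u ∈ s) :
    ∑ᶠ u, w u = ∑ u ∈ s, w u :=
  finsum_eq_finset_sum_of_support_subset w (by intro u hu; exact h u hu)

theorem afw_finsum_smul_eq_sum (w : E → ℝ) (s : Finset E) (h : ∀ u, w u ≠ 0 → u ∈ s) :
    ∑ᶠ u, w u • u = ∑ u ∈ s, w u • u := by
  refine finsum_eq_finset_sum_of_support_subset _ ?_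
  intro u hu
  simp only [Function.mem_support] at hu
  exact h u (fun hz => hu (by rw [hz, zero_smul]))

theorem afw_sum_ind_smul [DecidableEq E] (s : Finset E) (vv : E) (hv : vv ∈ s) (d : ℝ) :
    ∑ u ∈ s, ((if u = vv then d else 0) • u) = d • vv := by
  rw [Finset.sum_eq_single_of_mem vv hv]
  · simp
  · intro b _ hb; simp [hb]

theorem afw_sum_ind [DecidableEq E] (s : Finset E) (vv : E) (hv : vv ∈ s) (d : ℝ) :
    ∑ u ∈ s, (if u = vv then d else 0) = d := by
  rw [Finset.sum_eq_single_of_mem vv hv]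
  · simp
  · intro b _ hb; simp [hb]

theorem afw_comb_mem {C : Set E} (hC : Convex ℝ C) (w : E → ℝ)
    (hfin : (Function.support w).Finite) (hnn : ∀ u, 0 ≤ w u)
    (hsum : ∑ᶠ u, w u = 1) (hsub : ∀ u, w u ≠ 0 → u ∈ C) :
    ∑ᶠ u, w u • u ∈ C := by
  rw [afw_finsum_smul_eq_sum w hfin.toFinset (by intro u hu; simpa using hu)]
  rw [afw_finsum_eq_sum w hfin.toFinset (by intro u hu; simpa using hu)] at hsum
  refine hC.sum_mem (fun u _ => hnn u) hsum ?_
  intro u hu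
  exact hsub u (by simpa using hu)

end helpers
theorem afw_rec0 {c hm hm1 : ℝ} (hc : 0 < c) (hb : 4*c*hm1 ≤ 4*c*hm - hm^2) :
    hm1 * (0 + 1 + 1) ≤ 4*c := by
  nlinarith [sq_nonneg (hm - 2*c)]
theorem afw_rec1 {c hm hm1 M : ℝ} (hc : 0 ≤ c) (hM : 1 ≤ M) (hmp : 0 < hm)
    (ih : hm * (M+1) ≤ 4*c) (hge : 2*c ≤ hm) (hb : hm1 ≤ c) :
    hm1 * (M + 1 + 1) ≤ 4*c := by
  nlinarith [mul_le_mul_of_nonneg_right hge (by linarith : (0:ℝ) ≤ M + 1),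
    mul_le_mul_of_nonneg_right hb (by linarith : (0:ℝ) ≤ M + 2)]
theorem afw_rec2 {c hm hm1 M : ℝ} (hc : 0 < c) (hM : 1 ≤ M) (hmp : 0 < hm)
    (ih : hm * (M+1) ≤ 4*c) (hb : 4*c*hm1 ≤ 4*c*hm - hm^2) :
    hm1 * (M + 1 + 1) ≤ 4*c := by
  have k1 : 0 ≤ 4*c - (M+1)*hm := by nlinarith
  have k2 : 0 ≤ 4*c - hm := by nlinarith
  have key : 0 ≤ (4*c - (M+1)*hm) * (4*c - hm) + hm^2 :=
    le_add_of_nonneg_of_le (mul_nonneg k1 k2) (by positivity)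
  nlinarith [mul_le_mul_of_nonneg_right hb (by linarith : (0:ℝ) ≤ M + 2)]
theorem afw_fin {c hT T G : ℝ} (hc : 0 < hT) (hT2 : T ≤ 2 * G)
    (hfin : hT * (G + 1) ≤ 4 * c) : hT * T ≤ 8 * c := by
  nlinarith [mul_le_mul_of_nonneg_left hT2 hc.le]

/-- Sublinear convergence of the away-step Frank-Wolfe algorithm
(AFW) with line-search. -/
theorem afw_sublinear_convergence
    (n : ℕ) (C : Set (EuclideanSpace ℝ (Fin n)))
    (hCne : C.Nonempty) (hCcomp : IsCompact C) (hCconv : Convex ℝ C)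
    (V : Set (EuclideanSpace ℝ (Fin n))) (hV : V = Set.extremePoints ℝ C)
    (δ : ℝ) (hδ : 0 < δ) (hdiam : Metric.diam C = δ)
    (f : EuclideanSpace ℝ (Fin n) → ℝ)
    (g : EuclideanSpace ℝ (Fin n) → EuclideanSpace ℝ (Fin n))
    (L : ℝ)
    (hconv : ConvexOn ℝ C f)
    (hgrad : ∀ x ∈ C, HasGradientAt f (g x) x)
    (hsmooth : ∀ x ∈ C, ∀ y ∈ C,
      f y ≤ f x + ⟪g x, y - x⟫ + L / 2 * ‖y - x‖ ^ 2)
    -- the AFW sequence: weights `α t`, iterates `x t`, away vertices `a t`,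
    -- FW vertices `v t`, step sizes `η t`
    (α : ℕ → EuclideanSpace ℝ (Fin n) → ℝ)
    (x a v : ℕ → EuclideanSpace ℝ (Fin n)) (η : ℕ → ℝ)
    (x0 : EuclideanSpace ℝ (Fin n)) (hx0V : x0 ∈ V)
    (hα0 : α 0 = fun u => if u = x0 then 1 else 0)
    (hαnn : ∀ t u, 0 ≤ α t u)
    (hαV : ∀ t u, α t u ≠ 0 → u ∈ V)
    (hαfin : ∀ t, (Function.support (α t)).Finite)
    (hαsum : ∀ t, ∑ᶠ u, α t u = 1)
    (hx : ∀ t, x t = ∑ᶠ u, α t u • u)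
    (haS : ∀ t, α t (a t) ≠ 0)
    (hamax : ∀ t, ∀ u, α t u ≠ 0 → ⟪g (x t), u⟫ ≤ ⟪g (x t), a t⟫)
    (hvV : ∀ t, v t ∈ V)
    (hvmin : ∀ t, ∀ u ∈ C, ⟪g (x t), v t⟫ ≤ ⟪g (x t), u⟫)
    -- away step
    (haway : ∀ t, ⟪g (x t), x t - a t⟫ ≤ ⟪g (x t), v t - x t⟫ →
      ((α t (a t) = 1 → α (t + 1) = α t) ∧
       (α t (a t) ≠ 1 →
         η t ∈ Set.Icc (0 : ℝ) (α t (a t) / (1 - α t (a t))) ∧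
         (∀ η' ∈ Set.Icc (0 : ℝ) (α t (a t) / (1 - α t (a t))),
           f (x t + η t • (x t - a t)) ≤ f (x t + η' • (x t - a t))) ∧
         α (t + 1) = fun u =>
           (1 + η t) * α t u - η t * (if u = a t then 1 else 0))))
    -- FW step
    (hfw : ∀ t, ¬ ⟪g (x t), x t - a t⟫ ≤ ⟪g (x t), v t - x t⟫ →
      η t ∈ Set.Icc (0 : ℝ) 1 ∧
      (∀ η' ∈ Set.Icc (0 : ℝ) 1,
        f (x t + η t • (v t - x t)) ≤ f (x t + η' • (v t - x t))) ∧
      α (t + 1) = fun u =>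
        (1 - η t) * α t u + η t * (if u = v t then 1 else 0)) :
    ∀ t : ℕ, 1 ≤ t → ∀ y ∈ C, f (x t) - f y ≤ 4 * L * δ ^ 2 / (t : ℝ) := by
  classical
  -- basic setup
  have hVC : V ⊆ C := by rw [hV]; exact extremePoints_subset
  have hmemC : ∀ k u, α k u ≠ 0 → u ∈ C := fun k u h => hVC (hαV k u h)
  set sF : ℕ → Finset (EuclideanSpace ℝ (Fin n)) := fun k => (hαfin k).toFinset with hsF
  have hmemsF : ∀ k u, u ∈ sF k ↔ α k u ≠ 0 := by
    intro k u; simp [hsF, Function.mem_support]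
  have hsums : ∀ k, ∑ u ∈ sF k, α k u = 1 := by
    intro k
    rw [← afw_finsum_eq_sum (α k) (sF k) (fun u hu => (hmemsF k u).2 hu)]
    exact hαsum k
  have hxs : ∀ k, x k = ∑ u ∈ sF k, α k u • u := by
    intro k
    rw [hx k]
    exact afw_finsum_smul_eq_sum (α k) (sF k) (fun u hu => (hmemsF k u).2 hu)
  have hxC : ∀ k, x k ∈ C := by
    intro k
    rw [hxs k]
    exact hCconv.sum_mem (fun u _ => hαnn k u) (hsums k)
      (fun u hu => hmemC k u ((hmemsF k u).1 hu))
  have hvC : ∀ k, v k ∈ C := fun k => hVC (hvV k)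
  have haC : ∀ k, a k ∈ C := fun k => hmemC k (a k) (haS k)
  have hdist : ∀ p ∈ C, ∀ q ∈ C, ‖p - q‖ ≤ δ := by
    intro p hp q hq
    rw [← dist_eq_norm, ← hdiam]
    exact Metric.dist_le_diam_of_mem hCcomp.isBounded hp hq
  have hgi : ∀ p ∈ C, ∀ q ∈ C, f p + ⟪g p, q - p⟫ ≤ f q :=
    fun p hp q hq => afw_grad_ineq hconv (hgrad p hp) hp hq
  have hL0 : 0 ≤ L := by
    have hnontriv : C.Nontrivial := by
      by_contra hs
      rw [Set.not_nontrivial_iff] at hs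
      have := Metric.diam_subsingleton hs
      rw [hdiam] at this; linarith
    obtain ⟨p, hp, q, hq, hpq⟩ := hnontriv
    have h1 := hgi p hp q hq
    have h2 := hsmooth p hp q hq
    have h3 : 0 < ‖q - p‖ ^ 2 := by
      have h4 : 0 < ‖q - p‖ := norm_pos_iff.2 (sub_ne_zero.2 (Ne.symm hpq))
      positivity
    nlinarith
  have hα1 : ∀ k u, α k u ≤ 1 := by
    intro k u
    by_cases h0 : α k u = 0
    · rw [h0]; norm_num
    · rw [← hsums k]
      exact Finset.single_le_sum (fun i _ => hαnn k i) ((hmemsF k u).2 h0)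
  -- the goal
  intro t ht y hy
  set c : ℝ := L * δ ^ 2 / 2 with hc
  have hc0 : 0 ≤ c := div_nonneg (mul_nonneg hL0 (sq_nonneg δ)) (by norm_num)
  have hrhs : 4 * L * δ ^ 2 / (t : ℝ) = 8 * c / t := by rw [hc]; ring
  rw [hrhs]
  set h : ℕ → ℝ := fun k => f (x k) - f y with hh
  -- dual gap lower bound
  have hgap : ∀ k, h k ≤ ⟪g (x k), x k - v k⟫ := by
    intro k
    have h1 := hgi (x k) (hxC k) y hy
    have h2 := hvmin k y hy
    simp only [hh]
    rw [inner_sub_right]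
    rw [inner_sub_right] at h1
    linarith
  have haksF : ∀ k, a k ∈ sF k := fun k => (hmemsF k (a k)).2 (haS k)
  -- combination identity for away steps
  have hcombaw : ∀ k, ∀ γ : ℝ,
      ∑ u ∈ sF k, ((1 + γ) * α k u - γ * (if u = a k then 1 else 0)) • u
      = x k + γ • (x k - a k) := by
    intro k γ
    have hterm : ∀ u ∈ sF k, ((1 + γ) * α k u - γ * (if u = a k then 1 else 0)) • u
        = (1 + γ) • (α k u • u) - ((if u = a k then γ else 0) • u) := by
      intro u _
      by_cases hua : u = a k <;> simp [hua, sub_smul, mul_smul]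
    rw [Finset.sum_congr rfl hterm, Finset.sum_sub_distrib, ← Finset.smul_sum,
      afw_sum_ind_smul _ _ (haksF k), ← hxs k]
    module
  -- x update : away step
  have hxaw : ∀ k, ∀ γ : ℝ,
      (α (k+1) = fun u => (1 + γ) * α k u - γ * (if u = a k then 1 else 0)) →
      x (k+1) = x k + γ • (x k - a k) := by
    intro k γ hupd
    have hsub : ∀ u, α (k+1) u ≠ 0 → u ∈ sF k := by
      intro u hu
      rw [hupd] at hu
      by_cases hua : u = a k
      · rw [hua]; exact haksF k
      · refine (hmemsF k u).2 (fun h0 => hu ?_)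
        simp [hua, h0]
    rw [hx (k+1), afw_finsum_smul_eq_sum _ (sF k) hsub, hupd]
    exact hcombaw k γ
  -- away segment points are in C
  have hseg : ∀ k, ∀ γ : ℝ, 0 ≤ γ → γ ≤ α k (a k) / (1 - α k (a k)) →
      α k (a k) ≠ 1 → x k + γ • (x k - a k) ∈ C := by
    intro k γ h0 hγ hne
    have hlt : α k (a k) < 1 := lt_of_le_of_ne (hα1 k (a k)) hne
    have hγ1 : γ * (1 - α k (a k)) ≤ α k (a k) :=
      (le_div_iff₀ (by linarith)).1 hγ
    rw [← hcombaw k γ]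
    refine hCconv.sum_mem ?_ ?_ (fun u hu => hmemC k u ((hmemsF k u).1 hu))
    · intro u _
      by_cases hua : u = a k
      · simp only [hua, if_true, eq_self_iff_true]
        nlinarith [hαnn k (a k)]
      · simp only [if_neg hua]
        nlinarith [hαnn k u]
    · have hterm : ∀ u ∈ sF k, ((1 + γ) * α k u - γ * (if u = a k then 1 else 0))
          = (1 + γ) * α k u - (if u = a k then γ else 0) := by
        intro u _
        by_cases hua : u = a k <;> simp [hua]
      rw [Finset.sum_congr rfl hterm, Finset.sum_sub_distrib, ← Finset.mul_sum,
        hsums k, afw_sum_ind _ _ (haksF k)]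
      ring
  -- x update : FW step
  have hxfwk : ∀ k, ∀ γ : ℝ,
      (α (k+1) = fun u => (1 - γ) * α k u + γ * (if u = v k then 1 else 0)) →
      x (k+1) = x k + γ • (v k - x k) := by
    intro k γ hupd
    set s' : Finset (EuclideanSpace ℝ (Fin n)) := insert (v k) (sF k) with hs'
    have hvs' : v k ∈ s' := Finset.mem_insert_self _ _
    have hsub : ∀ u, α (k+1) u ≠ 0 → u ∈ s' := by
      intro u hu
      rw [hupd] at hu
      by_cases hua : u = v k
      · rw [hua]; exact hvs'
      · refine Finset.mem_insert_of_mem ((hmemsF k u).2 (fun h0 => hu ?_))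
        simp [hua, h0]
    have hxk' : x k = ∑ u ∈ s', α k u • u := by
      rw [hx k]
      exact afw_finsum_smul_eq_sum _ s'
        (fun u hu => Finset.mem_insert_of_mem ((hmemsF k u).2 hu))
    rw [hx (k+1), afw_finsum_smul_eq_sum _ s' hsub, hupd]
    have hterm : ∀ u ∈ s', ((1 - γ) * α k u + γ * (if u = v k then 1 else 0)) • u
        = (1 - γ) • (α k u • u) + ((if u = v k then γ else 0) • u) := by
      intro u _
      by_cases hua : u = v k <;> simp [hua, add_smul, mul_smul]
    rw [Finset.sum_congr rfl hterm, Finset.sum_add_distrib, ← Finset.smul_sum,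
      afw_sum_ind_smul _ _ hvs', ← hxk']
    module
  have hfwC : ∀ k, ∀ γ : ℝ, 0 ≤ γ → γ ≤ 1 → x k + γ • (v k - x k) ∈ C := by
    intro k γ h0 h1
    have := hCconv (hxC k) (hvC k) (by linarith : (0:ℝ) ≤ 1 - γ) h0 (by ring)
    convert this using 1
    module
  -- if away weight is 1 then x k = a k
  have hxa1 : ∀ k, α k (a k) = 1 → x k = a k := by
    intro k h1
    have hsingle : sF k = {a k} := by
      refine Finset.eq_singleton_iff_unique_mem.2 ⟨haksF k, ?_⟩
      intro u hu
      by_contra hua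
      have h2 : 0 < α k u := lt_of_le_of_ne (hαnn k u) (Ne.symm ((hmemsF k u).1 hu))
      have h4 : α k u + α k (a k) ≤ ∑ w ∈ sF k, α k w := by
        rw [← Finset.sum_pair hua]
        refine Finset.sum_le_sum_of_subset_of_nonneg ?_ (fun i _ _ => hαnn k i)
        intro w hw
        simp only [Finset.mem_insert, Finset.mem_singleton] at hw
        rcases hw with rfl | rfl
        · exact hu
        · exact haksF k
      rw [hsums k] at h4
      linarith
    rw [hxs k, hsingle]
    simp [h1]
  -- eta range facts
  have hetamax0 : ∀ k, α k (a k) ≠ 1 → 0 ≤ α k (a k) / (1 - α k (a k)) := by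
    intro k hne
    have h1 : α k (a k) < 1 := lt_of_le_of_ne (hα1 k (a k)) hne
    exact div_nonneg (hαnn k (a k)) (by linarith)
  -- monotonicity
  have hmono : ∀ k, h (k+1) ≤ h k := by
    intro k
    simp only [hh]
    by_cases hcond : ⟪g (x k), x k - a k⟫ ≤ ⟪g (x k), v k - x k⟫
    · by_cases h1 : α k (a k) = 1
      · rw [hx (k+1), hx k, (haway k hcond).1 h1]
      · obtain ⟨hηm, hls, hupd⟩ := (haway k hcond).2 h1
        rw [hxaw k (η k) hupd]
        have h2 := hls 0 ⟨le_rfl, hetamax0 k h1⟩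
        simpa using h2
    · obtain ⟨hηm, hls, hupd⟩ := hfw k hcond
      rw [hxfwk k (η k) hupd]
      have h2 := hls 0 ⟨le_rfl, zero_le_one⟩
      simpa using h2
  have hanti : ∀ j k : ℕ, j ≤ k → h k ≤ h j := by
    intro j k hjk
    induction k, hjk using Nat.le_induction with
    | base => exact le_rfl
    | succ m hm ih => exact (hmono m).trans ih
  -- classification predicates
  set P : ℕ → Prop := fun k => ¬ ⟪g (x k), x k - a k⟫ ≤ ⟪g (x k), v k - x k⟫ with hP
  set Dr : ℕ → Prop := fun k =>
    ¬ P k ∧ η k = α k (a k) / (1 - α k (a k)) with hDr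
  -- case: nonpositive gap
  rcases le_or_gt (h t) 0 with hneg | hpos
  · have : (0:ℝ) ≤ 8 * c / t := by positivity
    simp only [hh] at hneg
    linarith
  have hposk : ∀ k, k ≤ t → 0 < h k := fun k hk => lt_of_lt_of_le hpos (hanti k t hk)
  -- slope bound (FW direction)
  have hslope : ∀ k, ⟪g (x k), v k - x k⟫ ≤ -(h k) := by
    intro k
    have h1 := hgap k
    rw [inner_sub_right] at h1 ⊢
    linarith
  -- away step with positive gap has alpha_a ≠ 1
  have hane1 : ∀ k, k ≤ t → ¬ P k → α k (a k) ≠ 1 := by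
    intro k hk hnp heq
    have hxa := hxa1 k heq
    simp only [hP, not_not] at hnp
    rw [hxa] at hnp
    simp only [sub_self, inner_zero_right] at hnp
    have h2 := hslope k
    have h3 := hposk k hk
    rw [hxa] at h2
    linarith
  -- FW step progress
  have hstepfw : ∀ k, k < t → P k →
      (2*c ≤ h k ∧ h (k+1) ≤ c) ∨ (0 < c ∧ 4*c*(h (k+1)) ≤ 4*c*(h k) - (h k)^2) := by
    intro k hk hPk
    obtain ⟨hηm, hls, hupd⟩ := hfw k hPk
    have hx1 := hxfwk k (η k) hupd
    have hnv : ‖v k - x k‖ ≤ δ := hdist _ (hvC k) _ (hxC k)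
    have hsl := hslope k
    have hkey : ∀ γ : ℝ, 0 ≤ γ → γ ≤ 1 → h (k+1) ≤ h k - γ * h k + γ^2 * c := by
      intro γ h0 h1
      have hmem := hfwC k γ h0 h1
      have hsm := hsmooth (x k) (hxC k) _ hmem
      have e1 : x k + γ • (v k - x k) - x k = γ • (v k - x k) := by abel
      rw [e1, inner_smul_right, norm_smul, Real.norm_eq_abs, abs_of_nonneg h0] at hsm
      have e2 : L / 2 * (γ * ‖v k - x k‖)^2 ≤ γ^2 * c := by
        rw [hc, mul_pow]
        have e3 : ‖v k - x k‖^2 ≤ δ^2 := by nlinarith [norm_nonneg (v k - x k)]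
        calc L / 2 * (γ^2 * ‖v k - x k‖^2) = γ^2/2 * (L * ‖v k - x k‖^2) := by ring
          _ ≤ γ^2/2 * (L * δ^2) :=
            mul_le_mul_of_nonneg_left (mul_le_mul_of_nonneg_left e3 hL0) (by positivity)
          _ = γ^2 * (L * δ^2 / 2) := by ring
      have hls' := hls γ ⟨h0, h1⟩
      rw [← hx1] at hls'
      have e4 : γ * ⟪g (x k), v k - x k⟫ ≤ γ * (-(h k)) :=
        mul_le_mul_of_nonneg_left hsl h0
      simp only [hh] at *
      linarith
    rcases lt_or_ge (h k) (2*c) with hlt | hge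
    · right
      have hhk := hposk k (le_of_lt hk)
      have hcpos : 0 < c := by linarith
      refine ⟨hcpos, ?_⟩
      have h01 : 0 ≤ h k / (2*c) := div_nonneg hhk.le (by linarith)
      have h11 : h k / (2*c) ≤ 1 := by
        rw [div_le_one (by linarith)]; linarith
      have hk2 := hkey _ h01 h11
      calc 4*c*(h (k+1)) ≤ 4*c*(h k - h k / (2*c) * h k + (h k / (2*c))^2 * c) :=
            mul_le_mul_of_nonneg_left hk2 (by linarith)
        _ = 4*c*(h k) - (h k)^2 := by field_simp; ring
    · left
      refine ⟨hge, ?_⟩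
      have hk2 := hkey 1 zero_le_one le_rfl
      simpa using hk2
  -- away good step progress
  have hstepag : ∀ k, k < t → ¬ P k → ¬ Dr k →
      0 < c ∧ 4*c*(h (k+1)) ≤ 4*c*(h k) - (h k)^2 := by
    intro k hk hnp hdr
    have hcond : ⟪g (x k), x k - a k⟫ ≤ ⟪g (x k), v k - x k⟫ := not_not.1 hnp
    have hne : α k (a k) ≠ 1 := hane1 k (le_of_lt hk) hnp
    obtain ⟨hηm, hls, hupd⟩ := (haway k hcond).2 hne
    have hemx0 := hetamax0 k hne
    have hx1 := hxaw k (η k) hupd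
    have hnd : ‖x k - a k‖ ≤ δ := hdist _ (hxC k) _ (haC k)
    have hK0 : 0 ≤ L * ‖x k - a k‖^2 := mul_nonneg hL0 (sq_nonneg _)
    have hs0 : ⟪g (x k), x k - a k⟫ ≤ -(h k) := hcond.trans (hslope k)
    have hpos' : 0 < h k := hposk k (le_of_lt hk)
    have hw : η k < α k (a k) / (1 - α k (a k)) :=
      lt_of_le_of_ne hηm.2 (fun he => hdr ⟨hnp, he⟩)
    have hw0 : 0 ≤ η k := hηm.1
    set emx : ℝ := α k (a k) / (1 - α k (a k)) with hemx
    set K : ℝ := L * ‖x k - a k‖^2 with hKdef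
    -- smoothness along the away segment
    have hsm2 : ∀ γ1 γ2 : ℝ, 0 ≤ γ1 → γ1 ≤ emx → 0 ≤ γ2 → γ2 ≤ emx →
        f (x k + γ2 • (x k - a k)) ≤ f (x k + γ1 • (x k - a k))
          + (γ2 - γ1) * ⟪g (x k + γ1 • (x k - a k)), x k - a k⟫
          + (γ2 - γ1)^2 * (K/2) := by
      intro γ1 γ2 ha1 hb1 ha2 hb2
      have hsm := hsmooth _ (hseg k γ1 ha1 hb1 hne) _ (hseg k γ2 ha2 hb2 hne)
      have e1 : x k + γ2 • (x k - a k) - (x k + γ1 • (x k - a k))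
          = (γ2 - γ1) • (x k - a k) := by module
      rw [e1, inner_smul_right, norm_smul, Real.norm_eq_abs] at hsm
      have e2 : L / 2 * (|γ2 - γ1| * ‖x k - a k‖)^2 = (γ2 - γ1)^2 * (K/2) := by
        rw [mul_pow, sq_abs, hKdef]; ring
      rw [e2] at hsm
      exact hsm
    -- lower bound on the directional derivative at the line-search point
    have hi : -((K/2) * (emx - η k)) ≤ ⟪g (x k + η k • (x k - a k)), x k - a k⟫ := by
      have h1 := hls emx ⟨hemx0, le_rfl⟩
      have h2 := hsm2 (η k) emx hw0 (le_of_lt hw) hemx0 le_rfl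
      have h3 : 0 < emx - η k := by linarith
      nlinarith [h1, h2, h3]
    -- upper bound (gradient-Lipschitz style)
    have hii : ⟪g (x k + η k • (x k - a k)), x k - a k⟫ ≤ ⟪g (x k), x k - a k⟫ + K * η k := by
      rcases eq_or_lt_of_le hw0 with he | hlt0
      · rw [← he]
        simp only [zero_smul, add_zero]
        nlinarith [hK0]
      · have h1 := hsm2 0 (η k) le_rfl hemx0 hw0 (le_of_lt hw)
        have h2 := hsm2 (η k) 0 hw0 (le_of_lt hw) le_rfl hemx0
        simp only [zero_smul, add_zero] at h1 h2
        nlinarith [h1, h2, hlt0]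
    have hKemx : h k ≤ K * emx := by
      nlinarith [hi, hii, hs0, le_of_lt hw, hemx0, hK0, hw0]
    have hKpos : 0 < K := by
      rcases lt_or_ge 0 K with hp | hn
      · exact hp
      · exfalso; nlinarith [mul_nonpos_of_nonpos_of_nonneg hn hemx0]
    have hK2c : K ≤ 2 * c := by
      rw [hKdef, hc]
      have e3 : ‖x k - a k‖^2 ≤ δ^2 := by nlinarith [norm_nonneg (x k - a k)]
      nlinarith [mul_le_mul_of_nonneg_left e3 hL0]
    have hcpos : 0 < c := by linarith
    refine ⟨hcpos, ?_⟩
    -- take the step γ = h k / K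
    have hγ0 : 0 ≤ h k / K := div_nonneg hpos'.le hKpos.le
    have hγemx : h k / K ≤ emx := by
      rw [div_le_iff₀ hKpos]; linarith [hKemx]
    have h1 := hls (h k / K) ⟨hγ0, hγemx⟩
    have h2 := hsm2 0 (h k / K) le_rfl hemx0 hγ0 hγemx
    simp only [zero_smul, add_zero] at h1 h2
    rw [← hx1] at h1
    have e5 : (h k / K - 0) * ⟪g (x k), x k - a k⟫ ≤ (h k / K) * (-(h k)) := by
      rw [sub_zero]
      exact mul_le_mul_of_nonneg_left hs0 hγ0
    have e6 : (h k / K) * (-(h k)) + (h k / K - 0)^2 * (K/2) = -((h k)^2/(2*K)) := by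
      field_simp; ring
    have hq : h (k+1) ≤ h k - (h k)^2/(2*K) := by
      simp only [hh] at *
      linarith
    have e8 : (h k)^2 ≤ 4*c*((h k)^2/(2*K)) := by
      rw [mul_div_assoc']
      rw [le_div_iff₀ (by linarith : (0:ℝ) < 2*K)]
      nlinarith [sq_nonneg (h k)]
    have e9 : 4*c*(h k - (h k)^2/(2*K)) = 4*c*(h k) - 4*c*((h k)^2/(2*K)) := by ring
    calc 4*c*(h (k+1)) ≤ 4*c*(h k - (h k)^2/(2*K)) :=
          mul_le_mul_of_nonneg_left hq (by linarith)
      _ ≤ 4*c*(h k) - (h k)^2 := by linarith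
  -- support bookkeeping
  have hsuppfw : ∀ k, P k → (sF (k+1)).card ≤ (sF k).card + 1 := by
    intro k hPk
    obtain ⟨_, _, hupd⟩ := hfw k hPk
    have hsub : sF (k+1) ⊆ insert (v k) (sF k) := by
      intro u hu
      rw [hmemsF] at hu
      rw [hupd] at hu
      by_cases hua : u = v k
      · rw [hua]; exact Finset.mem_insert_self _ _
      · refine Finset.mem_insert_of_mem ((hmemsF k u).2 (fun h0 => hu ?_))
        simp [hua, h0]
    exact (Finset.card_le_card hsub).trans (Finset.card_insert_le _ _)
  have hsuppag : ∀ k, k ≤ t → ¬ P k → (sF (k+1)).card ≤ (sF k).card := by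
    intro k hk hnp
    have hcond : ⟪g (x k), x k - a k⟫ ≤ ⟪g (x k), v k - x k⟫ := not_not.1 hnp
    by_cases h1 : α k (a k) = 1
    · have heq := (haway k hcond).1 h1
      have : sF (k+1) = sF k := by
        ext u; rw [hmemsF, hmemsF, heq]
      rw [this]
    · obtain ⟨_, _, hupd⟩ := (haway k hcond).2 h1
      refine Finset.card_le_card ?_
      intro u hu
      rw [hmemsF] at hu
      rw [hupd] at hu
      by_cases hua : u = a k
      · rw [hua]; exact haksF k
      · refine (hmemsF k u).2 (fun h0 => hu ?_)
        simp [hua, h0]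
  have hsuppdr : ∀ k, k < t → Dr k → (sF (k+1)).card + 1 ≤ (sF k).card := by
    intro k hk hdrk
    obtain ⟨hnp, hηeq⟩ := hdrk
    have hcond : ⟪g (x k), x k - a k⟫ ≤ ⟪g (x k), v k - x k⟫ := not_not.1 hnp
    have hne : α k (a k) ≠ 1 := hane1 k (le_of_lt hk) hnp
    have hlt1 : α k (a k) < 1 := lt_of_le_of_ne (hα1 k (a k)) hne
    obtain ⟨_, _, hupd⟩ := (haway k hcond).2 hne
    have hzero : α (k+1) (a k) = 0 := by
      rw [hupd]
      simp only [if_pos rfl, eq_self_iff_true, if_true]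
      rw [hηeq]
      have hne' : 1 - α k (a k) ≠ 0 := by intro hz; apply hne; linarith
      field_simp
      ring
    have hsub : sF (k+1) ⊆ (sF k).erase (a k) := by
      intro u hu
      rw [hmemsF] at hu
      refine Finset.mem_erase.2 ⟨?_, ?_⟩
      · intro hua; rw [hua] at hu; exact hu hzero
      · rw [hupd] at hu
        by_cases hua : u = a k
        · rw [hua]; exact haksF k
        · refine (hmemsF k u).2 (fun h0 => hu ?_)
          simp [hua, h0]
    have := Finset.card_le_card hsub
    rw [Finset.card_erase_of_mem (haksF k)] at this
    have hge1 : 1 ≤ (sF k).card := Finset.card_pos.2 ⟨a k, haksF k⟩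
    omega
  -- counters
  set Fc : ℕ → ℕ := fun k => ((Finset.range k).filter P).card with hFc
  set Dc : ℕ → ℕ := fun k => ((Finset.range k).filter Dr).card with hDc
  set Gc : ℕ → ℕ := fun k => ((Finset.range k).filter (fun j => ¬ Dr j)).card with hGc
  have hN0 : (sF 0).card = 1 := by
    have : sF 0 = {x0} := by
      ext u
      rw [hmemsF 0 u, hα0]
      by_cases hu : u = x0 <;> simp [hu]
    rw [this]; simp
  have hcount : ∀ k, k ≤ t → (sF k).card + Dc k ≤ 1 + Fc k := by
    intro k
    induction k with
    | zero => intro _; simp only [hFc, hDc]; simp [hN0]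
    | succ m ih =>
      intro hk
      have hm := ih (by omega)
      simp only [hFc, hDc] at hm ⊢
      rw [Finset.range_add_one, Finset.filter_insert, Finset.filter_insert]
      by_cases hp : P m
      · have hdrf : ¬ Dr m := fun hd => hd.1 hp
        rw [if_pos hp, if_neg hdrf, Finset.card_insert_of_notMem (by simp)]
        have h1 := hsuppfw m hp
        omega
      · by_cases hd : Dr m
        · rw [if_neg hp, if_pos hd, Finset.card_insert_of_notMem (by simp)]
          have h1 := hsuppdr m (by omega) hd
          omega
        · rw [if_neg hp, if_neg hd]
          have h1 := hsuppag m (by omega) hp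
          omega
  have hGD : ∀ k, Gc k + Dc k = k := by
    intro k
    simp only [hGc, hDc]
    rw [add_comm]
    rw [Finset.card_filter_add_card_filter_not (fun j => Dr j)]
    exact Finset.card_range k
  have hFG : ∀ k, Fc k ≤ Gc k := by
    intro k
    apply Finset.card_le_card
    intro j hj
    simp only [Finset.mem_filter] at *
    exact ⟨hj.1, fun hd => hd.1 (hj.2)⟩
  -- progress induction
  have hprog : ∀ k, k ≤ t → 1 ≤ Gc k → h k * (Gc k + 1) ≤ 4 * c := by
    intro k
    induction k with
    | zero => intro _ h1; exact absurd h1 (by simp [hGc])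
    | succ m ih =>
      intro hk hg1
      have hmt : m ≤ t := by omega
      have hmlt : m < t := hk
      have hmpos := hposk m hmt
      have hm1pos := hposk (m+1) hk
      by_cases hd : Dr m
      · have hGs : Gc (m+1) = Gc m := by
          simp only [hGc]
          rw [Finset.range_add_one, Finset.filter_insert, if_neg (not_not_intro hd)]
        rw [hGs] at hg1 ⊢
        have ihm := ih hmt hg1
        have h2 : h (m+1) * ((Gc m : ℝ) + 1) ≤ h m * ((Gc m : ℝ) + 1) :=
          mul_le_mul_of_nonneg_right (hmono m) (by linarith [(Nat.cast_nonneg (Gc m) : (0:ℝ) ≤ (Gc m : ℝ))])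
        linarith
      · have hGs : Gc (m+1) = Gc m + 1 := by
          simp only [hGc]
          rw [Finset.range_add_one, Finset.filter_insert, if_pos hd,
            Finset.card_insert_of_notMem (by simp)]
        rw [hGs]
        have hdisj : (2*c ≤ h m ∧ h (m+1) ≤ c) ∨
            (0 < c ∧ 4*c*(h (m+1)) ≤ 4*c*(h m) - (h m)^2) := by
          by_cases hp : P m
          · exact hstepfw m hmlt hp
          · exact Or.inr (hstepag m hmlt hp hd)
        by_cases hg0 : Gc m = 0
        · rw [hg0]
          push_cast
          rcases hdisj with ⟨hge, hb⟩ | ⟨hcp, hb⟩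
          · linarith [hb, hc0]
          · have := afw_rec0 hcp hb
            linarith
        · have hg1'' : 1 ≤ Gc m := by omega
          have ihm := ih hmt hg1''
          have hM1 : (1:ℝ) ≤ (Gc m : ℝ) := by exact_mod_cast hg1''
          push_cast
          push_cast at ihm
          rcases hdisj with ⟨hge, hb⟩ | ⟨hcp, hb⟩
          · have := afw_rec1 hc0 hM1 hmpos ihm hge hb
            linarith
          · have := afw_rec2 hcp hM1 hmpos ihm hb
            linarith
  -- finish
  have hNpos : 1 ≤ (sF t).card := by
    refine Finset.card_pos.2 ⟨a t, ?_⟩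
    rw [hmemsF]
    exact haS t
  have hDF : Dc t ≤ Fc t := by
    have := hcount t le_rfl
    omega
  have ht2G : t ≤ 2 * Gc t := by
    have h1 := hGD t
    have h2 := hFG t
    omega
  have hG1 : 1 ≤ Gc t := by omega
  have hfin := hprog t le_rfl hG1
  have htpos : (0:ℝ) < t := by exact_mod_cast ht
  have hcast : (t:ℝ) ≤ 2 * (Gc t : ℝ) := by exact_mod_cast ht2G
  have hineq : h t * t ≤ 8 * c := afw_fin hpos hcast hfin
  calc f (x t) - f y = h t := rfl
    _ ≤ 8 * c / t := by rw [le_div_iff₀ htpos]; exact hineq
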